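/- Let B be a branch of T and let A₁,…,A_m be pairwise disjoint memory intervals, each disjoint from B and each partitioned by B. Then each A_i lies in memory strictly between some vertex w of B and its parent w′ on B (i.e., every vertex of A_i comes after w′ and before w in vEB_ε(T)); moreover, for each vertex of B and its parent, at most one of the intervals A_i lies between them in memory. -/

import Mathlib

namespace VEB

inductive OTree : Type where
  | node : List OTree → OTree

def OTree.children : OTree → List OTree
  | .node cs => cs

mutual
  def height : OTree → ℕ
    | .node cs => 1 + heightList cs
  def heightList : List OTree → ℕ
    | [] => 0
    | c :: cs => max (height c) (heightList cs)
end

def subtreeAt? : OTree → List ℕ → Option OTree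
  | t, [] => some t
  | t, i :: p =>
    match t.children[i]? with
    | some c => subtreeAt? c p
    | none => none

/-- `p` is (the path of) a vertex of `t`. -/
def IsVertex (t : OTree) (p : List ℕ) : Prop := (subtreeAt? t p).isSome

/-- `p` is a leaf of `t`. -/
def IsLeaf (t : OTree) (p : List ℕ) : Prop := subtreeAt? t p = some (.node [])

/-- All leaves of `t` are at the same depth (the bottom level). -/
def Uniform (t : OTree) : Prop := ∀ p, IsLeaf t p → p.length + 1 = height t

/-- The top `m+1` levels of `t` (the truncation of height `m+1`). -/
def trunc : ℕ → OTree → OTree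
  | 0, _ => .node []
  | m+1, t => .node (t.children.map (trunc m))

/-- Paths of the vertices at depth `m`, in left-to-right order. -/
def levelPaths : ℕ → OTree → List (List ℕ)
  | 0, _ => [[]]
  | m+1, t => (t.children.zipIdx.map fun ic => (levelPaths m ic.1).map (ic.2 :: ·)).flatten

/-- The level at which a tree of height `h` is cut: `max ⌊ε h⌋ 1`. -/
noncomputable def cutLevel (ε : ℝ) (h : ℕ) : ℕ := max ⌊ε * (h : ℝ)⌋₊ 1

/-- The van Emde Boas order of the vertex paths of `t` (with recursion fuel). -/
noncomputable def vEBAux (ε : ℝ) : ℕ → OTree → List (List ℕ)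
  | 0, _ => []
  | fuel+1, t =>
    if height t ≤ 1 then [[]]
    else
      let m := cutLevel ε (height t)
      vEBAux ε fuel (trunc (m - 1) t) ++
        ((levelPaths m t).map fun q =>
          match subtreeAt? t q with
          | some s => (vEBAux ε fuel s).map (q ++ ·)
          | none => []).flatten

/-- The van Emde Boas order `vEB_ε(t)` of the vertex paths of `t`. -/
noncomputable def vEB (ε : ℝ) (t : OTree) : List (List ℕ) := vEBAux ε (height t) t

/-- Position (index) of vertex `p` in the van Emde Boas order. -/
noncomputable def pos (ε : ℝ) (t : OTree) (p : List ℕ) : ℕ := (vEB ε t).idxOf p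

/-- `A` is a set of vertices occupying consecutive positions in `vEB_ε(t)`. -/
def MemInterval (ε : ℝ) (t : OTree) (A : Set (List ℕ)) : Prop :=
  ∃ i n, A = {p | p ∈ ((vEB ε t).drop i).take n}

/-- The vertices of the decomposition `D` of `t`: pairs `(p, k)` of the root path
and the height of a decomposition subtree (with recursion fuel). -/
noncomputable def decompAux (ε : ℝ) : ℕ → OTree → List (List ℕ × ℕ)
  | 0, _ => []
  | fuel+1, t =>
    if height t ≤ 1 then [([], 1)]
    else
      let m := cutLevel ε (height t)
      ([], height t) ::
        (decompAux ε fuel (trunc (m - 1) t) ++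
          ((levelPaths m t).map fun q =>
            match subtreeAt? t q with
            | some s => (decompAux ε fuel s).map fun r => (q ++ r.1, r.2)
            | none => []).flatten)

/-- The vertices of the decomposition `D` of `t`. -/
noncomputable def decompVerts (ε : ℝ) (t : OTree) : List (List ℕ × ℕ) :=
  decompAux ε (height t) t

/-- The children in the decomposition tree `D` of the decomposition vertex `(p, k)`:
the top tree followed by the bottom trees in left-to-right order. -/
noncomputable def dChildren (ε : ℝ) (t : OTree) (p : List ℕ) (k : ℕ) : List (List ℕ × ℕ) :=
  if k ≤ 1 then []
  else
    match subtreeAt? t p with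
    | some s =>
      (p, cutLevel ε k) ::
        (levelPaths (cutLevel ε k) s).map fun q => (p ++ q, k - cutLevel ε k)
    | none => []

/-- The decomposition subtree `(p, k)` contains the vertex `w` of `t`;
equivalently, the leaf `{w}` of `D` lies in the subtree of `D` rooted at `(p, k)`. -/
def DContains (p : List ℕ) (k : ℕ) (w : List ℕ) : Prop :=
  p <+: w ∧ w.length < p.length + k

/-- Vertex `v` is to the left of the branch with leaf `ℓ`. -/
def LeftOfBranch (v ℓ : List ℕ) : Prop := List.Lex (· < ·) v (ℓ.take v.length)

/-- Vertex `v` is to the right of the branch with leaf `ℓ`. -/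
def RightOfBranch (v ℓ : List ℕ) : Prop := List.Lex (· < ·) (ℓ.take v.length) v

/-- Every internal vertex of `t` has at least `a` children. -/
def MinArity (t : OTree) (a : ℕ) : Prop :=
  ∀ p s, subtreeAt? t p = some s → s.children ≠ [] → a ≤ s.children.length

/-- Every internal vertex of `t` has at most `b` children. -/
def MaxArity (t : OTree) (b : ℕ) : Prop :=
  ∀ p s, subtreeAt? t p = some s → s.children.length ≤ b

/-- `w` lies on the leftmost branch descending from `v` (always taking the leftmost child). -/
def OnLeftmostBranch (v w : List ℕ) : Prop :=
  v <+: w ∧ ∀ n (hn : n < w.length), v.length ≤ n → w.get ⟨n, hn⟩ = 0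

/-- `w` lies on the rightmost branch descending from `v` (always taking the rightmost child). -/
def OnRightmostBranch (t : OTree) (v w : List ℕ) : Prop :=
  v <+: w ∧ ∀ n (hn : n < w.length), v.length ≤ n →
    ∀ s, subtreeAt? t (w.take n) = some s → w.get ⟨n, hn⟩ + 1 = s.children.length


-- ### basic height lemmas

lemma one_le_height (t : OTree) : 1 ≤ height t := by
  cases t with | node cs => rw [height]; omega

lemma height_le_of_mem_heightList {c : OTree} {cs : List OTree} (h : c ∈ cs) :
    height c ≤ heightList cs := by
  induction cs with
  | nil => cases h
  | cons a as ih =>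
    rw [heightList]
    rcases List.mem_cons.1 h with rfl | h
    · exact le_max_left _ _
    · exact le_trans (ih h) (le_max_right _ _)

lemma heightList_le {cs : List OTree} {n : ℕ} (h : ∀ c ∈ cs, height c ≤ n) :
    heightList cs ≤ n := by
  induction cs with
  | nil => rw [heightList]; omega
  | cons a as ih =>
    rw [heightList]
    exact max_le (h a (by simp)) (ih fun c hc => h c (by simp [hc]))

lemma exists_mem_of_lt_heightList {cs : List OTree} {n : ℕ} (h : n < heightList cs) :
    ∃ c ∈ cs, n < height c := by
  induction cs with
  | nil => rw [heightList] at h; omega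
  | cons a as ih =>
    rw [heightList] at h
    rcases lt_max_iff.1 h with h | h
    · exact ⟨a, by simp, h⟩
    · obtain ⟨c, hc, hn⟩ := ih h
      exact ⟨c, by simp [hc], hn⟩

lemma mem_of_getElem? {α} {l : List α} {i : ℕ} {a : α} (h : l[i]? = some a) : a ∈ l := by
  obtain ⟨hlt, rfl⟩ := List.getElem?_eq_some_iff.1 h
  exact List.getElem_mem hlt

lemma subtreeAt?_cons (t : OTree) (i : ℕ) (p : List ℕ) :
    subtreeAt? t (i :: p) =
      match t.children[i]? with
      | some c => subtreeAt? c p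
      | none => none := by
  rw [subtreeAt?]

lemma subtreeAt?_append (t : OTree) (p q : List ℕ) :
    subtreeAt? t (p ++ q) = (subtreeAt? t p).bind (fun s => subtreeAt? s q) := by
  induction p generalizing t with
  | nil => simp [subtreeAt?]
  | cons i p ih =>
    rw [List.cons_append, subtreeAt?_cons, subtreeAt?_cons]
    cases t.children[i]? with
    | none => simp
    | some c => simp [ih]

lemma subtree_height_le {t s : OTree} {p : List ℕ} (h : subtreeAt? t p = some s) :
    height s + p.length ≤ height t := by
  induction p generalizing t with
  | nil => simp [subtreeAt?] at h; subst h; simp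
  | cons i p ih =>
    rw [subtreeAt?_cons] at h
    cases hc : t.children[i]? with
    | none => rw [hc] at h; simp at h
    | some c =>
      rw [hc] at h
      have h1 := ih h
      have h2 : height c ≤ heightList t.children :=
        height_le_of_mem_heightList (mem_of_getElem? hc)
      cases t with | node cs =>
        rw [height]
        simp only [OTree.children] at h2
        simp only [List.length_cons]
        omega

lemma exists_leaf (t : OTree) : ∃ q, IsLeaf t q := by
  generalize hh : height t = h
  induction h using Nat.strong_induction_on generalizing t with
  | _ h ih =>
    cases t with | node cs =>
    cases cs with
    | nil => exact ⟨[], rfl⟩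
    | cons a as =>
      have ha : height a < height (.node (a :: as)) := by
        have := height_le_of_mem_heightList (c := a) (cs := a :: as) (by simp)
        rw [height]; omega
      obtain ⟨q, hq⟩ := ih (height a) (by omega) a rfl
      refine ⟨0 :: q, ?_⟩
      rw [IsLeaf, subtreeAt?_cons]
      simp [OTree.children, hq, IsLeaf] at hq ⊢
      exact hq

lemma isVertex_take {t : OTree} {p : List ℕ} (h : IsVertex t p) (k : ℕ) :
    IsVertex t (p.take k) := by
  rw [IsVertex] at h ⊢
  have := subtreeAt?_append t (p.take k) (p.drop k)
  rw [List.take_append_drop] at this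
  rw [this] at h
  cases hs : subtreeAt? t (p.take k) with
  | none => rw [hs] at h; simp at h
  | some s => simp

lemma subtree_uniform {t s : OTree} {p : List ℕ} (ht : Uniform t)
    (h : subtreeAt? t p = some s) : Uniform s ∧ height s + p.length = height t := by
  have hle := subtree_height_le h
  obtain ⟨q₀, hq₀⟩ := exists_leaf s
  have hleaf : IsLeaf t (p ++ q₀) := by
    rw [IsLeaf, subtreeAt?_append, h, Option.bind_some]; exact hq₀
  have h1 := ht _ hleaf
  rw [List.length_append] at h1
  have hq₀len := subtree_height_le (t := s) (p := q₀) hq₀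
  have hhs : height (.node []) = 1 := by rw [height, heightList]
  rw [hhs] at hq₀len
  have hge : height t ≤ height s + p.length := by omega
  refine ⟨?_, by omega⟩
  intro r hr
  have hleaf' : IsLeaf t (p ++ r) := by
    rw [IsLeaf, subtreeAt?_append, h, Option.bind_some]; exact hr
  have := ht _ hleaf'
  rw [List.length_append] at this
  omega

-- ### trunc lemmas

lemma trunc_children (k : ℕ) (t : OTree) :
    (trunc (k+1) t).children = t.children.map (trunc k) := by
  rw [trunc]; rfl

lemma subtreeAt?_trunc (p : List ℕ) : ∀ (k : ℕ) (t : OTree),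
    subtreeAt? (trunc k t) p =
      if p.length ≤ k then (subtreeAt? t p).map (trunc (k - p.length)) else none := by
  induction p with
  | nil =>
    intro k t
    simp [subtreeAt?]
  | cons i p ih =>
    intro k t
    cases k with
    | zero =>
      rw [subtreeAt?_cons]
      have : (trunc 0 t).children = [] := by rw [trunc]; rfl
      rw [this]
      simp
    | succ k =>
      rw [subtreeAt?_cons, subtreeAt?_cons, trunc_children, List.getElem?_map]
      cases hc : t.children[i]? with
      | none => simp
      | some c =>
        simp only [Option.map_some]
        rw [ih k c]
        simp only [List.length_cons, Nat.succ_le_succ_iff, Nat.succ_sub_succ]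

lemma height_trunc_le (k : ℕ) (t : OTree) : height (trunc k t) ≤ k + 1 := by
  induction k generalizing t with
  | zero =>
    rw [trunc, height, heightList]
  | succ k ih =>
    rw [trunc, height]
    have : heightList (t.children.map (trunc k)) ≤ k + 1 := by
      refine heightList_le ?_
      intro c hc
      obtain ⟨c', _, rfl⟩ := List.mem_map.1 hc
      exact ih c'
    omega

lemma trunc_eq_leafnode {j : ℕ} {s : OTree} :
    trunc j s = .node [] ↔ j = 0 ∨ s.children = [] := by
  cases j with
  | zero => simp [trunc]
  | succ j =>
    rw [trunc]
    constructor
    · intro h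
      right
      have := congrArg OTree.children h
      simp only [OTree.children] at this
      exact List.map_eq_nil_iff.1 this
    · rintro (h | h)
      · omega
      · rw [h]; rfl

lemma children_eq_nil_iff {s : OTree} : s.children = [] ↔ s = .node [] := by
  cases s with | node cs => simp [OTree.children]

lemma isLeaf_trunc {k : ℕ} {t : OTree} {p : List ℕ} :
    IsLeaf (trunc k t) p ↔
      p.length ≤ k ∧ ∃ s, subtreeAt? t p = some s ∧ (p.length = k ∨ s.children = []) := by
  rw [IsLeaf, subtreeAt?_trunc]
  by_cases hk : p.length ≤ k
  · rw [if_pos hk]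
    cases hs : subtreeAt? t p with
    | none => simp
    | some s =>
      simp only [Option.map_some, Option.some.injEq, hs]
      rw [trunc_eq_leafnode]
      constructor
      · rintro (h | h)
        · exact ⟨hk, s, rfl, Or.inl (by omega)⟩
        · exact ⟨hk, s, rfl, Or.inr h⟩
      · rintro ⟨-, s', hs', (h | h)⟩
        · exact Or.inl (by cases hs'; omega)
        · cases hs'; exact Or.inr h
  · rw [if_neg hk]
    simp [hk]

lemma uniform_trunc {t : OTree} {k : ℕ} (ht : Uniform t) (hk : k < height t) :
    Uniform (trunc k t) ∧ height (trunc k t) = k + 1 := by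
  have hle := height_trunc_le k t
  -- a vertex of length k exists in t
  obtain ⟨l0, hl0⟩ := exists_leaf t
  have hl0len : l0.length + 1 = height t := ht _ hl0
  have hkv : IsVertex t (l0.take k) := isVertex_take (by rw [IsVertex, hl0]; rfl) k
  have hkvlen : (l0.take k).length = k := by
    rw [List.length_take]; omega
  have hvert : IsVertex (trunc k t) (l0.take k) := by
    rw [IsVertex, subtreeAt?_trunc, if_pos (le_of_eq hkvlen)]
    rw [IsVertex] at hkv
    cases hs : subtreeAt? t (l0.take k) with
    | none => rw [hs] at hkv; simp at hkv
    | some s => simp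
  have hge : k + 1 ≤ height (trunc k t) := by
    rw [IsVertex] at hvert
    cases hs : subtreeAt? (trunc k t) (l0.take k) with
    | none => rw [hs] at hvert; simp at hvert
    | some s =>
      have := subtree_height_le hs
      have := one_le_height s
      omega
  have hh : height (trunc k t) = k + 1 := le_antisymm hle hge
  refine ⟨?_, hh⟩
  intro p hp
  rw [isLeaf_trunc] at hp
  obtain ⟨hplen, s, hs, hcase⟩ := hp
  rw [hh]
  rcases hcase with h | h
  · omega
  · have hsleaf : IsLeaf t p := by
      rw [IsLeaf, hs, children_eq_nil_iff.1 h]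
    have := ht _ hsleaf
    omega

-- ### levelPaths lemmas

lemma mem_levelPaths : ∀ {m : ℕ} {t : OTree} {p : List ℕ}, p ∈ levelPaths m t →
    p.length = m ∧ IsVertex t p := by
  intro m
  induction m with
  | zero =>
    intro t p hp
    rw [levelPaths] at hp
    simp at hp
    subst hp
    exact ⟨rfl, by rw [IsVertex, subtreeAt?]; rfl⟩
  | succ m ih =>
    intro t p hp
    rw [levelPaths] at hp
    rw [List.mem_flatten] at hp
    obtain ⟨blk, hblk, hpblk⟩ := hp
    obtain ⟨⟨c, i⟩, hic, rfl⟩ := List.mem_map.1 hblk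
    obtain ⟨hilt, hceq⟩ := List.mem_zipIdx' hic
    obtain ⟨p', hp', rfl⟩ := List.mem_map.1 hpblk
    obtain ⟨hlen, hvert⟩ := ih hp'
    refine ⟨by simp [hlen], ?_⟩
    rw [IsVertex, subtreeAt?_cons]
    have : t.children[i]? = some c := by
      rw [List.getElem?_eq_some_iff]
      exact ⟨hilt, hceq.symm⟩
    rw [this]
    exact hvert

lemma vertex_mem_levelPaths : ∀ {p : List ℕ} {t : OTree}, IsVertex t p →
    p ∈ levelPaths p.length t := by
  intro p
  induction p with
  | nil => intro t _; show [] ∈ levelPaths 0 t; rw [levelPaths]; simp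
  | cons i p ih =>
    intro t hv
    rw [IsVertex, subtreeAt?_cons] at hv
    cases hc : t.children[i]? with
    | none => rw [hc] at hv; simp at hv
    | some c =>
      rw [hc] at hv
      rw [List.length_cons, levelPaths, List.mem_flatten]
      refine ⟨(levelPaths p.length c).map (i :: ·), ?_, ?_⟩
      · refine List.mem_map.2 ⟨(c, i), ?_, rfl⟩
        exact List.mk_mem_zipIdx_iff_getElem?.2 hc
      · exact List.mem_map.2 ⟨p, ih hv, rfl⟩

lemma pairwise_levelPaths : ∀ (m : ℕ) (t : OTree),
    List.Pairwise (List.Lex (· < ·)) (levelPaths m t) := by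
  intro m
  induction m with
  | zero => intro t; rw [levelPaths]; simp
  | succ m ih =>
    intro t
    rw [levelPaths, List.pairwise_flatten]
    constructor
    · intro blk hblk
      obtain ⟨⟨c, i⟩, _, rfl⟩ := List.mem_map.1 hblk
      rw [List.pairwise_map]
      exact (ih c).imp (fun h => List.Lex.cons h)
    · rw [List.pairwise_map]
      rw [List.pairwise_iff_getElem]
      intro a b ha hb hab
      simp only [List.getElem_zipIdx, Nat.zero_add]
      intro x hx y hy
      obtain ⟨x', _, rfl⟩ := List.mem_map.1 hx
      obtain ⟨y', _, rfl⟩ := List.mem_map.1 hy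
      have : a < b := by simpa using hab
      exact List.Lex.rel this

-- ### Lex lemmas

lemma lex_asymm : ∀ {a b : List ℕ}, List.Lex (· < ·) a b → ¬ List.Lex (· < ·) b a := by
  intro a b h
  induction h with
  | nil => intro h2; cases h2
  | @cons x l1 l2 h ih =>
    intro h2
    cases h2 with
    | cons h3 => exact ih h3
    | rel h3 => exact lt_irrefl _ h3
  | @rel a' l1 b' l2 h =>
    intro h2
    cases h2 with
    | cons h3 => exact lt_irrefl _ h
    | rel h3 => exact lt_asymm h h3

lemma lex_append_iff {q a b : List ℕ} :
    List.Lex (· < ·) (q ++ a) (q ++ b) ↔ List.Lex (· < ·) a b := by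
  induction q with
  | nil => simp
  | cons x q ih =>
    simp only [List.cons_append]
    constructor
    · intro h
      cases h with
      | cons h => exact ih.1 h
      | rel h => exact absurd h (lt_irrefl x)
    · intro h
      exact List.Lex.cons (ih.2 h)

lemma lex_append_of_lex : ∀ {a b : List ℕ}, a.length = b.length →
    List.Lex (· < ·) a b → ∀ (x y : List ℕ), List.Lex (· < ·) (a ++ x) (b ++ y) := by
  intro a
  induction a with
  | nil =>
    intro b hlen h
    cases h with
    | nil => simp at hlen
    | _ => simp at hlen
  | cons u a ih =>
    intro b hlen h
    cases h with
    | cons h =>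
      intro x y
      simp only [List.cons_append]
      refine List.Lex.cons (ih (by simpa using hlen) h x y)
    | rel h =>
      intro x y
      simp only [List.cons_append]
      exact List.Lex.rel h

-- ### cutLevel lemmas

lemma cutLevel_pos (ε : ℝ) (h : ℕ) : 1 ≤ cutLevel ε h := le_max_right _ _

lemma cutLevel_lt {ε : ℝ} (hε0 : 0 < ε) (hε1 : ε ≤ 1/2) {h : ℕ} (hh : 2 ≤ h) :
    cutLevel ε h < h := by
  rw [cutLevel]
  have h1 : (⌊ε * (h : ℝ)⌋₊ : ℝ) ≤ ε * h := Nat.floor_le (by positivity)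
  have h2 : ε * h ≤ (h : ℝ) / 2 := by
    have : (0:ℝ) ≤ h := by positivity
    nlinarith
  have h3 : (h : ℝ) / 2 ≤ (h : ℝ) - 1 := by
    have : (2:ℝ) ≤ h := by exact_mod_cast hh
    linarith
  have h4 : (⌊ε * (h : ℝ)⌋₊ : ℝ) ≤ (h : ℝ) - 1 := by linarith
  have h5 : ⌊ε * (h : ℝ)⌋₊ ≤ h - 1 := by
    have : ((h - 1 : ℕ) : ℝ) = (h : ℝ) - 1 := by
      push_cast [Nat.cast_sub (by omega : 1 ≤ h)]
      ring
    exact_mod_cast h4.trans_eq this.symm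
  omega

lemma vEBAux_succ (ε : ℝ) (fuel : ℕ) (t : OTree) (h2 : ¬ height t ≤ 1) :
    vEBAux ε (fuel + 1) t =
      vEBAux ε fuel (trunc (cutLevel ε (height t) - 1) t) ++
        ((levelPaths (cutLevel ε (height t)) t).map fun q =>
          match subtreeAt? t q with
          | some s => (vEBAux ε fuel s).map (q ++ ·)
          | none => []).flatten := by
  rw [vEBAux, if_neg h2]

lemma mem_blockFun {ε : ℝ} {fuel : ℕ} {t : OTree} {q x : List ℕ}
    (h : x ∈ (match subtreeAt? t q with
      | some s => (vEBAux ε fuel s).map (q ++ ·)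
      | none => ([] : List (List ℕ)))) :
    ∃ s r, subtreeAt? t q = some s ∧ r ∈ vEBAux ε fuel s ∧ x = q ++ r := by
  cases hs : subtreeAt? t q with
  | none => rw [hs] at h; cases h
  | some s =>
    rw [hs] at h
    obtain ⟨r, hr, rfl⟩ := List.mem_map.1 h
    exact ⟨s, r, rfl, hr, rfl⟩

lemma mem_vEBAux_length {ε : ℝ} (hε0 : 0 < ε) (hε1 : ε ≤ 1/2) :
    ∀ (fuel : ℕ) (t : OTree) (p : List ℕ),
    p ∈ vEBAux ε fuel t → p.length < height t := by
  intro fuel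
  induction fuel with
  | zero => intro t p hp; rw [vEBAux] at hp; cases hp
  | succ fuel ih =>
    intro t p hp
    rw [vEBAux] at hp
    by_cases h1 : height t ≤ 1
    · rw [if_pos h1] at hp
      have := one_le_height t
      simp at hp
      subst hp
      simpa using by omega
    · rw [if_neg h1] at hp
      simp only at hp
      have hm1 : 1 ≤ cutLevel ε (height t) := cutLevel_pos ε (height t)
      have hmh : cutLevel ε (height t) < height t := cutLevel_lt hε0 hε1 (by omega)
      rcases List.mem_append.1 hp with hp | hp
      · have := ih _ _ hp
        have := height_trunc_le (cutLevel ε (height t) - 1) t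
        omega
      · rw [List.mem_flatten] at hp
        obtain ⟨blk, hblk, hpblk⟩ := hp
        obtain ⟨q, hq, rfl⟩ := List.mem_map.1 hblk
        obtain ⟨s, r, hs, hr, rfl⟩ := mem_blockFun hpblk
        have hql : q.length = cutLevel ε (height t) := (mem_levelPaths hq).1
        have h2 := ih _ _ hr
        have h3 := subtree_height_le hs
        rw [List.length_append]
        omega

lemma nodup_vEBAux {ε : ℝ} (hε0 : 0 < ε) (hε1 : ε ≤ 1/2) :
    ∀ (fuel : ℕ) (t : OTree), (vEBAux ε fuel t).Nodup := by
  intro fuel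
  induction fuel with
  | zero => intro t; rw [vEBAux]; exact List.nodup_nil
  | succ fuel ih =>
    intro t
    rw [vEBAux]
    by_cases h1 : height t ≤ 1
    · rw [if_pos h1]; simp
    · rw [if_neg h1]
      simp only
      set m := cutLevel ε (height t) with hm
      refine List.Nodup.append (ih _) ?_ ?_
      · rw [List.nodup_flatten]
        constructor
        · intro blk hblk
          obtain ⟨q, hq, rfl⟩ := List.mem_map.1 hblk
          cases hs : subtreeAt? t q with
          | none => exact List.nodup_nil
          | some s =>
            refine (ih s).map ?_
            intro a b hab
            exact List.append_cancel_left hab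
        · rw [List.pairwise_map]
          refine List.Pairwise.imp_of_mem ?_ (pairwise_levelPaths m t)
          intro q1 q2 hq1 hq2 hlex x hx1 hx2
          obtain ⟨s1, r1, _, _, rfl⟩ := mem_blockFun hx1
          obtain ⟨s2, r2, _, _, hx⟩ := mem_blockFun hx2
          have hl1 : q1.length = m := (mem_levelPaths hq1).1
          have hl2 : q2.length = m := (mem_levelPaths hq2).1
          have : q1 = q2 := (List.append_inj hx (by omega)).1
          subst this
          exact lex_asymm hlex hlex
      · intro p hp hp'
        have h2 := mem_vEBAux_length hε0 hε1 _ _ _ hp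
        have h3 := height_trunc_le (m - 1) t
        have hm1 : 1 ≤ m := cutLevel_pos ε (height t)
        rw [List.mem_flatten] at hp'
        obtain ⟨blk, hblk, hpblk⟩ := hp'
        obtain ⟨q, hq, rfl⟩ := List.mem_map.1 hblk
        obtain ⟨s, r, hs, hr, hpe⟩ := mem_blockFun hpblk
        have hql : q.length = m := (mem_levelPaths hq).1
        have : p.length = q.length + r.length := by rw [hpe]; simp
        omega

lemma not_left_and_right {v ℓ : List ℕ} (h1 : LeftOfBranch v ℓ) (h2 : RightOfBranch v ℓ) :
    False := lex_asymm h1 h2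

lemma left_take_iff {ℓ v : List ℕ} {c : ℕ} (hv : v.length ≤ c) :
    LeftOfBranch v (ℓ.take c) ↔ LeftOfBranch v ℓ := by
  rw [LeftOfBranch, LeftOfBranch, List.take_take, min_eq_left hv]

lemma right_take_iff {ℓ v : List ℕ} {c : ℕ} (hv : v.length ≤ c) :
    RightOfBranch v (ℓ.take c) ↔ RightOfBranch v ℓ := by
  rw [RightOfBranch, RightOfBranch, List.take_take, min_eq_left hv]

lemma left_drop_iff {ℓ v' : List ℕ} {m : ℕ} (hm : m ≤ ℓ.length) :
    LeftOfBranch (ℓ.take m ++ v') ℓ ↔ LeftOfBranch v' (ℓ.drop m) := by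
  rw [LeftOfBranch, LeftOfBranch]
  have h1 : (ℓ.take m ++ v').length = m + v'.length := by
    simp [List.length_take]; omega
  rw [h1, List.take_add]
  exact lex_append_iff

lemma right_drop_iff {ℓ v' : List ℕ} {m : ℕ} (hm : m ≤ ℓ.length) :
    RightOfBranch (ℓ.take m ++ v') ℓ ↔ RightOfBranch v' (ℓ.drop m) := by
  rw [RightOfBranch, RightOfBranch]
  have h1 : (ℓ.take m ++ v').length = m + v'.length := by
    simp [List.length_take]; omega
  rw [h1, List.take_add]
  exact lex_append_iff

lemma leftOf_of_lex_level {ℓ q' v' : List ℕ} {m : ℕ} (hm : m ≤ ℓ.length)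
    (hlen : q'.length = m) (hlex : List.Lex (· < ·) q' (ℓ.take m)) :
    LeftOfBranch (q' ++ v') ℓ := by
  rw [LeftOfBranch]
  have h1 : (q' ++ v').length = m + v'.length := by simp [hlen]
  rw [h1, List.take_add]
  exact lex_append_of_lex (by rw [hlen, List.length_take]; omega) hlex _ _

lemma rightOf_of_lex_level {ℓ q' v' : List ℕ} {m : ℕ} (hm : m ≤ ℓ.length)
    (hlen : q'.length = m) (hlex : List.Lex (· < ·) (ℓ.take m) q') :
    RightOfBranch (q' ++ v') ℓ := by
  rw [RightOfBranch]
  have h1 : (q' ++ v').length = m + v'.length := by simp [hlen]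
  rw [h1, List.take_add]
  exact lex_append_of_lex (by rw [hlen, List.length_take]; omega) hlex _ _

-- ### arrangement structure

def AllL (ℓ : List ℕ) (xs : List (List ℕ)) : Prop := ∀ v ∈ xs, LeftOfBranch v ℓ
def AllR (ℓ : List ℕ) (xs : List (List ℕ)) : Prop := ∀ v ∈ xs, RightOfBranch v ℓ

inductive Arr (ℓ : List ℕ) : ℕ → List (List ℕ) → Prop
  | last (T : List (List ℕ)) (hT : AllR ℓ T) : Arr ℓ ℓ.length (ℓ :: T)
  | step (d : ℕ) (hd : d < ℓ.length) (R L xs : List (List ℕ))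
      (hR : AllR ℓ R) (hL : AllL ℓ L) (h : Arr ℓ (d+1) xs) :
      Arr ℓ d (ℓ.take d :: (R ++ (L ++ xs)))

lemma arr_head {ℓ : List ℕ} {d : ℕ} {xs : List (List ℕ)} (h : Arr ℓ d xs) :
    ∃ tl, xs = ℓ.take d :: tl := by
  cases h with
  | last T hT => exact ⟨T, by rw [List.take_length]⟩
  | step d hd R L xs hR hL h => exact ⟨_, rfl⟩

lemma arr_le_length {ℓ : List ℕ} {d : ℕ} {xs : List (List ℕ)} (h : Arr ℓ d xs) :
    d ≤ ℓ.length := by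
  cases h with
  | last T hT => exact le_refl _
  | step d hd _ _ _ _ _ _ => exact le_of_lt hd

lemma arr_append_right {ℓ : List ℕ} {d : ℕ} {xs T : List (List ℕ)}
    (h : Arr ℓ d xs) (hT : AllR ℓ T) : Arr ℓ d (xs ++ T) := by
  induction h with
  | last T' hT' =>
    rw [List.cons_append]
    exact Arr.last _ (fun v hv => (List.mem_append.1 hv).elim (hT' v) (hT v))
  | step d hd R L xs hR hL h ih =>
    have : (ℓ.take d :: (R ++ (L ++ xs))) ++ T = ℓ.take d :: (R ++ (L ++ (xs ++ T))) := by
      simp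
    rw [this]
    exact Arr.step d hd R L _ hR hL ih

lemma arr_map {ℓ : List ℕ} {m : ℕ} (hm : m ≤ ℓ.length) :
    ∀ {d : ℕ} {ys : List (List ℕ)}, Arr (ℓ.drop m) d ys →
    Arr ℓ (m + d) (ys.map (ℓ.take m ++ ·)) := by
  intro d ys h
  induction h with
  | last T hT =>
    rw [List.map_cons, List.take_append_drop]
    have hidx : m + (ℓ.drop m).length = ℓ.length := by
      rw [List.length_drop]; omega
    rw [hidx]
    refine Arr.last _ ?_
    intro v hv
    obtain ⟨v', hv', rfl⟩ := List.mem_map.1 hv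
    exact (right_drop_iff hm).2 (hT v' hv')
  | step d hd R L xs hR hL h ih =>
    rw [List.map_cons, List.map_append, List.map_append]
    have hidx : ℓ.take m ++ (ℓ.drop m).take d = ℓ.take (m + d) := (List.take_add (l := ℓ) (i := m) (j := d)).symm
    rw [hidx]
    have hd' : m + d < ℓ.length := by
      rw [List.length_drop] at hd; omega
    have := Arr.step (ℓ := ℓ) (m + d) hd' (R.map (ℓ.take m ++ ·)) (L.map (ℓ.take m ++ ·)) _
      (fun v hv => by
        obtain ⟨v', hv', rfl⟩ := List.mem_map.1 hv
        exact (right_drop_iff hm).2 (hR v' hv'))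
      (fun v hv => by
        obtain ⟨v', hv', rfl⟩ := List.mem_map.1 hv
        exact (left_drop_iff hm).2 (hL v' hv'))
      (by rw [show m + d + 1 = m + (d + 1) by omega]; exact ih)
    exact this

lemma arr_splice {ℓ : List ℕ} {c : ℕ} (hc : c < ℓ.length) :
    ∀ {d : ℕ} {xs : List (List ℕ)}, Arr (ℓ.take c) d xs →
    (∀ v ∈ xs, v.length ≤ c) →
    ∀ {L ys : List (List ℕ)}, AllL ℓ L → Arr ℓ (c + 1) ys →
    Arr ℓ d (xs ++ (L ++ ys)) := by
  intro d xs h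
  induction h with
  | last T hT =>
    intro hlen L ys hL hys
    rw [List.cons_append]
    have hcl : (ℓ.take c).length = c := by rw [List.length_take]; omega
    rw [hcl]
    refine Arr.step c hc T L ys ?_ hL hys
    intro v hv
    have hvlen : v.length ≤ c := hlen v (by simp [hv])
    exact (right_take_iff hvlen).1 (hT v hv)
  | step d hd R L' xs hR hL' h ih =>
    intro hlen L ys hL hys
    have hcl : (ℓ.take c).length = c := by rw [List.length_take]; omega
    rw [hcl] at hd
    have htk : (ℓ.take c).take d = ℓ.take d := by
      rw [List.take_take, min_eq_left (le_of_lt hd)]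
    have hassoc : (ℓ.take c).take d :: (R ++ (L' ++ xs)) ++ (L ++ ys)
        = ℓ.take d :: (R ++ (L' ++ (xs ++ (L ++ ys)))) := by
      rw [htk]; simp
    rw [hassoc]
    refine Arr.step d (by omega) R L' _ ?_ ?_ ?_
    · intro v hv
      have hvlen : v.length ≤ c := hlen v (by simp [hv])
      exact (right_take_iff hvlen).1 (hR v hv)
    · intro v hv
      have hvlen : v.length ≤ c := hlen v (by simp [hv])
      exact (left_take_iff hvlen).1 (hL' v hv)
    · exact ih (fun v hv => hlen v (by simp [hv])) hL hys

-- ### master lemma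

lemma arr_vEBAux {ε : ℝ} (hε0 : 0 < ε) (hε1 : ε ≤ 1/2) :
    ∀ (fuel : ℕ) (t : OTree) (ℓ : List ℕ), height t ≤ fuel → Uniform t → IsLeaf t ℓ →
    Arr ℓ 0 (vEBAux ε fuel t) := by
  intro fuel
  induction fuel with
  | zero =>
    intro t ℓ hf
    have := one_le_height t
    omega
  | succ fuel ih =>
    intro t ℓ hf ht hℓ
    have hℓlen : ℓ.length + 1 = height t := ht ℓ hℓ
    by_cases h1 : height t ≤ 1
    · rw [vEBAux, if_pos h1]
      have hℓnil : ℓ = [] := by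
        have : ℓ.length = 0 := by omega
        exact List.eq_nil_of_length_eq_zero this
      subst hℓnil
      exact Arr.last [] (fun v hv => by cases hv)
    · rw [vEBAux_succ ε fuel t h1]
      set h := height t with hh
      set m := cutLevel ε h with hmdef
      have hm1 : 1 ≤ m := cutLevel_pos ε h
      have hmh : m < h := cutLevel_lt hε0 hε1 (by omega)
      have hmℓ : m ≤ ℓ.length := by omega
      have hvert : IsVertex t ℓ := by rw [IsVertex, hℓ]; rfl
      -- top tree
      obtain ⟨htru, htrh⟩ := uniform_trunc ht (show m - 1 < h by omega)
      obtain ⟨s', hs'⟩ := Option.isSome_iff_exists.1 (isVertex_take hvert (m-1))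
      have htopleaf : IsLeaf (trunc (m-1) t) (ℓ.take (m-1)) := by
        refine isLeaf_trunc.2 ⟨?_, s', hs', Or.inl ?_⟩ <;>
          (rw [List.length_take]; omega)
      have htop : Arr (ℓ.take (m-1)) 0 (vEBAux ε fuel (trunc (m-1) t)) :=
        ih _ _ (by omega) htru htopleaf
      have hlen_top : ∀ v ∈ vEBAux ε fuel (trunc (m-1) t), v.length ≤ m - 1 := by
        intro v hv
        have := mem_vEBAux_length hε0 hε1 _ _ _ hv
        omega
      -- bottom tree of the branch
      obtain ⟨s, hs⟩ := Option.isSome_iff_exists.1 (isVertex_take hvert m)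
      obtain ⟨hsu, hsh⟩ := subtree_uniform ht hs
      have hstake : (ℓ.take m).length = m := by rw [List.length_take]; omega
      have hsleaf : IsLeaf s (ℓ.drop m) := by
        have := subtreeAt?_append t (ℓ.take m) (ℓ.drop m)
        rw [List.take_append_drop, hs, Option.bind_some] at this
        rw [IsLeaf, ← this]
        exact hℓ
      have hbot : Arr (ℓ.drop m) 0 (vEBAux ε fuel s) := by
        refine ih _ _ (by omega) hsu hsleaf
      have hcenter : Arr ℓ m ((vEBAux ε fuel s).map (ℓ.take m ++ ·)) := by
        have := arr_map hmℓ hbot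
        rwa [Nat.add_zero] at this
      -- split the level paths at the branch
      have hq : ℓ.take m ∈ levelPaths m t := by
        have := vertex_mem_levelPaths (isVertex_take hvert m)
        rwa [hstake] at this
      obtain ⟨P₁, P₂, hsplit⟩ := List.append_of_mem hq
      have hpw := pairwise_levelPaths m t
      rw [hsplit] at hpw
      obtain ⟨hpw1, hpw2, hcross⟩ := List.pairwise_append.1 hpw
      have hlexP₁ : ∀ a ∈ P₁, List.Lex (· < ·) a (ℓ.take m) :=
        fun a ha => hcross a ha _ (by simp)
      have hlexP₂ : ∀ b ∈ P₂, List.Lex (· < ·) (ℓ.take m) b :=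
        fun b hb => (List.pairwise_cons.1 hpw2).1 b hb
      have hlenLP : ∀ a, a ∈ levelPaths m t → a.length = m := fun a ha => (mem_levelPaths ha).1
      -- block function
      set F := (fun q => match subtreeAt? t q with
          | some s => (vEBAux ε fuel s).map (q ++ ·)
          | none => ([] : List (List ℕ))) with hF
      have hleft : AllL ℓ ((P₁.map F).flatten) := by
        intro v hv
        rw [List.mem_flatten] at hv
        obtain ⟨blk, hblk, hvblk⟩ := hv
        obtain ⟨a, ha, rfl⟩ := List.mem_map.1 hblk
        obtain ⟨sa, r, hsa, hr, rfl⟩ := mem_blockFun hvblk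
        refine leftOf_of_lex_level hmℓ ?_ (hlexP₁ a ha)
        exact hlenLP a (by rw [hsplit]; simp [ha])
      have hright : AllR ℓ ((P₂.map F).flatten) := by
        intro v hv
        rw [List.mem_flatten] at hv
        obtain ⟨blk, hblk, hvblk⟩ := hv
        obtain ⟨a, ha, rfl⟩ := List.mem_map.1 hblk
        obtain ⟨sa, r, hsa, hr, rfl⟩ := mem_blockFun hvblk
        refine rightOf_of_lex_level hmℓ ?_ (hlexP₂ a ha)
        exact hlenLP a (by rw [hsplit]; simp [ha])
      have hys : Arr ℓ ((m-1) + 1) ((vEBAux ε fuel s).map (ℓ.take m ++ ·) ++ (P₂.map F).flatten) := by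
        rw [show m - 1 + 1 = m by omega]
        exact arr_append_right hcenter hright
      have hmain := arr_splice (show m - 1 < ℓ.length by omega) htop hlen_top hleft hys
      have hFq : F (ℓ.take m) = (vEBAux ε fuel s).map (ℓ.take m ++ ·) := by
        rw [hF]
        simp only [hs]
      have hgoal : vEBAux ε fuel (trunc (m-1) t) ++
          ((levelPaths m t).map F).flatten
          = vEBAux ε fuel (trunc (m-1) t) ++
            ((P₁.map F).flatten ++
              ((vEBAux ε fuel s).map (ℓ.take m ++ ·) ++ (P₂.map F).flatten)) := by
        rw [hsplit, List.map_append, List.map_cons, List.flatten_append, List.flatten_cons, hFq]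
      rw [hgoal]
      exact hmain

-- ### indexOf helpers

section IndexOf
variable {α : Type*} [BEq α] [LawfulBEq α]

lemma indexOf_cons_self' (a : α) (l : List α) : (a :: l).idxOf a = 0 := by
  rw [List.idxOf_cons]; simp

lemma indexOf_lt_length' {a : α} {l : List α} (h : a ∈ l) : l.idxOf a < l.length := by
  induction l with
  | nil => cases h
  | cons x l ih =>
    rw [List.idxOf_cons]
    cases hx : (x == a) with
    | true => simp
    | false =>
      simp only [cond_false, List.length_cons]
      have : a ∈ l := by
        rcases List.mem_cons.1 h with h | h
        · subst h; simp at hx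
        · exact h
      have := ih this
      omega

lemma indexOf_append_left {a : α} {as bs : List α} (h : a ∈ as) :
    (as ++ bs).idxOf a = as.idxOf a := by
  induction as with
  | nil => cases h
  | cons x as ih =>
    rw [List.cons_append, List.idxOf_cons, List.idxOf_cons]
    cases hx : (x == a) with
    | true => simp
    | false =>
      simp only [cond_false]
      have hmem : a ∈ as := by
        rcases List.mem_cons.1 h with h | h
        · subst h; simp at hx
        · exact h
      rw [ih hmem]

lemma indexOf_append_right {a : α} {as bs : List α} (h : a ∉ as) :
    (as ++ bs).idxOf a = as.length + bs.idxOf a := by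
  induction as with
  | nil => simp
  | cons x as ih =>
    have hx : (x == a) = false := by
      cases hx : (x == a) with
      | true => exact absurd (List.mem_cons.2 (Or.inl (eq_of_beq hx).symm)) h
      | false => rfl
    rw [List.cons_append, List.idxOf_cons, hx]
    simp only [cond_false, List.length_cons]
    rw [ih (fun ha => h (by simp [ha]))]
    omega

lemma indexOf_lt_of_mem_take {p : α} : ∀ {l : List α} {n : ℕ}, p ∈ l.take n → l.idxOf p < n := by
  intro l
  induction l with
  | nil => intro n h; simp at h
  | cons x l ih =>
    intro n h
    cases n with
    | zero => simp at h
    | succ n =>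
      rw [List.take_succ_cons] at h
      rw [List.idxOf_cons]
      cases hx : (x == p) with
      | true => simp
      | false =>
        simp only [cond_false]
        have hmem : p ∈ l.take n := by
          rcases List.mem_cons.1 h with h | h
          · subst h; simp at hx
          · exact h
        have := ih hmem
        omega

lemma mem_take_of_indexOf_lt {p : α} : ∀ {l : List α} {n : ℕ}, p ∈ l → l.idxOf p < n →
    p ∈ l.take n := by
  intro l
  induction l with
  | nil => intro n h; simp at h
  | cons x l ih =>
    intro n hmem hlt
    rw [List.idxOf_cons] at hlt
    cases hx : (x == p) with
    | true =>
      have : x = p := eq_of_beq hx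
      subst this
      rw [hx] at hlt
      simp only [cond_true] at hlt
      cases n with
      | zero => omega
      | succ n => rw [List.take_succ_cons]; simp
    | false =>
      rw [hx] at hlt
      simp only [cond_false] at hlt
      cases n with
      | zero => omega
      | succ n =>
        rw [List.take_succ_cons]
        have hpm : p ∈ l := by
          rcases List.mem_cons.1 hmem with h | h
          · subst h; simp at hx
          · exact h
        exact List.mem_cons.2 (Or.inr (ih hpm (by omega)))

lemma eq_of_indexOf_eq {u v : α} : ∀ {l : List α}, u ∈ l → v ∈ l →
    l.idxOf u = l.idxOf v → u = v := by
  intro l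
  induction l with
  | nil => intro h; cases h
  | cons x l ih =>
    intro hu hv h
    rw [List.idxOf_cons, List.idxOf_cons] at h
    cases hxu : (x == u) with
    | true =>
      cases hxv : (x == v) with
      | true => rw [← eq_of_beq hxu, ← eq_of_beq hxv]
      | false => rw [hxu, hxv] at h; simp at h
    | false =>
      cases hxv : (x == v) with
      | true => rw [hxu, hxv] at h; simp at h
      | false =>
        rw [hxu, hxv] at h
        simp only [cond_false] at h
        have hu' : u ∈ l := by
          rcases List.mem_cons.1 hu with h' | h'
          · subst h'; simp at hxu
          · exact h'
        have hv' : v ∈ l := by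
          rcases List.mem_cons.1 hv with h' | h'
          · subst h'; simp at hxv
          · exact h'
        exact ih hu' hv' (by omega)

lemma idx_of_decomp {xs as bs : List α} {b : α} (hN : xs.Nodup) (h : xs = as ++ b :: bs) :
    xs.idxOf b = as.length := by
  subst h
  obtain ⟨-, -, hdisj⟩ := List.nodup_append.1 hN
  have hb : b ∉ as := fun hbin => hdisj b hbin b (by simp) rfl
  rw [indexOf_append_right hb, indexOf_cons_self']
  omega

lemma idx_lt_iff_mem_left {xs as bs : List α} {u : α} (hN : xs.Nodup) (h : xs = as ++ bs)
    (hu : u ∈ xs) : xs.idxOf u < as.length ↔ u ∈ as := by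
  subst h
  constructor
  · intro hlt
    rcases List.mem_append.1 hu with h | h
    · exact h
    · obtain ⟨-, -, hdisj⟩ := List.nodup_append.1 hN
      have : u ∉ as := fun hbin => hdisj u hbin u h rfl
      rw [indexOf_append_right this] at hlt
      omega
  · intro h
    rw [indexOf_append_left h]
    exact indexOf_lt_length' h

lemma mem_window_iff {xs : List α} (hN : xs.Nodup) {a n : ℕ} {p : α} :
    p ∈ (xs.drop a).take n ↔ p ∈ xs ∧ a ≤ xs.idxOf p ∧ xs.idxOf p < a + n := by
  have hdecomp : xs = xs.take a ++ xs.drop a := (List.take_append_drop a xs).symm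
  constructor
  · intro hp
    have hpd : p ∈ xs.drop a := List.mem_of_mem_take hp
    have hpx : p ∈ xs := by rw [hdecomp]; exact List.mem_append.2 (Or.inr hpd)
    have halt : a < xs.length := by
      by_contra hcon
      rw [List.drop_eq_nil_of_le (by omega)] at hpd
      cases hpd
    have hnotin : p ∉ xs.take a := by
      intro hin
      obtain ⟨-, -, hdisj⟩ := List.nodup_append.1 (hdecomp ▸ hN)
      exact hdisj p hin p hpd rfl
    have hidx : xs.idxOf p = a + (xs.drop a).idxOf p := by
      conv_lhs => rw [hdecomp]
      rw [indexOf_append_right hnotin, List.length_take, min_eq_left (by omega)]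
    have := indexOf_lt_of_mem_take hp
    exact ⟨hpx, by omega, by omega⟩
  · rintro ⟨hpx, h1, h2⟩
    have hnotin : p ∉ xs.take a := by
      intro hin
      have := indexOf_lt_of_mem_take hin
      omega
    have hpd : p ∈ xs.drop a := by
      rcases List.mem_append.1 (hdecomp ▸ hpx) with h | h
      · exact absurd h hnotin
      · exact h
    have halt : a < xs.length := by
      by_contra hcon
      rw [List.drop_eq_nil_of_le (by omega)] at hpd
      cases hpd
    have hidx : xs.idxOf p = a + (xs.drop a).idxOf p := by
      conv_lhs => rw [hdecomp]
      rw [indexOf_append_right hnotin, List.length_take, min_eq_left (by omega)]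
    exact mem_take_of_indexOf_lt hpd (by omega)

end IndexOf

-- ### extraction lemmas from Arr

lemma arr_split {ℓ : List ℕ} : ∀ {d : ℕ} {xs : List (List ℕ)}, Arr ℓ d xs →
    ∀ e, d ≤ e → e ≤ ℓ.length →
    ∃ pre suf, xs = pre ++ ℓ.take e :: suf ∧ Arr ℓ e (ℓ.take e :: suf) ∧
      (∀ e', d ≤ e' → e' < e → ℓ.take e' ∈ pre) := by
  intro d xs h
  induction h with
  | last T hT =>
    intro e he1 he2
    have he : e = ℓ.length := le_antisymm he2 he1
    subst he
    refine ⟨[], T, by simp [List.take_length], ?_, ?_⟩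
    · rw [List.take_length]; exact Arr.last T hT
    · intro e' h1 h2; omega
  | step d hd R L xs hR hL h ih =>
    intro e he1 he2
    rcases eq_or_lt_of_le he1 with rfl | hlt
    · exact ⟨[], R ++ (L ++ xs), rfl, Arr.step d hd R L xs hR hL h,
        fun e' h1 h2 => absurd h2 (by omega)⟩
    · obtain ⟨pre, suf, heq, harr, hmem⟩ := ih e hlt he2
      refine ⟨ℓ.take d :: (R ++ (L ++ pre)), suf, ?_, harr, ?_⟩
      · rw [heq]; simp
      · intro e' h1 h2
        rcases eq_or_lt_of_le h1 with rfl | h1'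
        · exact List.mem_cons_self
        · exact List.mem_cons.2 (Or.inr (List.mem_append.2 (Or.inr (List.mem_append.2
            (Or.inr (hmem e' h1' h2))))))

lemma arr_side {ℓ : List ℕ} : ∀ {d : ℕ} {xs : List (List ℕ)}, Arr ℓ d xs → ∀ v ∈ xs,
    (∃ e, e ≤ ℓ.length ∧ v = ℓ.take e) ∨ LeftOfBranch v ℓ ∨ RightOfBranch v ℓ := by
  intro d xs h
  induction h with
  | last T hT =>
    intro v hv
    rcases List.mem_cons.1 hv with rfl | hv
    · exact Or.inl ⟨_, le_refl _, List.take_length.symm⟩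
    · exact Or.inr (Or.inr (hT v hv))
  | step d hd R L xs hR hL h ih =>
    intro v hv
    rcases List.mem_cons.1 hv with rfl | hv
    · exact Or.inl ⟨d, by omega, rfl⟩
    rcases List.mem_append.1 hv with hv | hv
    · exact Or.inr (Or.inr (hR v hv))
    rcases List.mem_append.1 hv with hv | hv
    · exact Or.inr (Or.inl (hL v hv))
    · exact ih v hv

lemma take_mem_of_arr {ℓ : List ℕ} {xs : List (List ℕ)} (hA : Arr ℓ 0 xs) {e : ℕ}
    (he : e ≤ ℓ.length) : ℓ.take e ∈ xs := by
  obtain ⟨pre, suf, heq, -, -⟩ := arr_split hA e (by omega) he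
  rw [heq]
  simp

lemma idx_mono {ℓ : List ℕ} {xs : List (List ℕ)} (hA : Arr ℓ 0 xs) (hN : xs.Nodup) {e : ℕ}
    (he : e < ℓ.length) :
    xs.idxOf (ℓ.take e) < xs.idxOf (ℓ.take (e+1)) := by
  obtain ⟨pre, suf, heq, harr, hmem⟩ := arr_split hA (e+1) (by omega) (by omega)
  have h2 := idx_of_decomp hN heq
  have h3 : ℓ.take e ∈ pre := hmem e (by omega) (by omega)
  have h4 : xs.idxOf (ℓ.take e) < pre.length := by
    rw [heq, indexOf_append_left h3]
    exact indexOf_lt_length' h3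
  omega

lemma arr_last_inv {ℓ : List ℕ} {d : ℕ} {xs : List (List ℕ)} (h : Arr ℓ d xs)
    (hd : d = ℓ.length) : ∃ T, xs = ℓ :: T ∧ AllR ℓ T := by
  cases h with
  | last T hT => exact ⟨T, rfl, hT⟩
  | step d hd' R L ys hR hL h => omega

lemma arr_step_inv {ℓ : List ℕ} {d : ℕ} {xs : List (List ℕ)} (h : Arr ℓ d xs)
    (hd : d < ℓ.length) :
    ∃ R L ys, xs = ℓ.take d :: (R ++ (L ++ ys)) ∧ AllR ℓ R ∧ AllL ℓ L ∧ Arr ℓ (d+1) ys := by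
  cases h with
  | last T hT => omega
  | step d hd' R L ys hR hL h => exact ⟨R, L, ys, rfl, hR, hL, h⟩

lemma right_of_after_leaf {ℓ : List ℕ} {xs : List (List ℕ)} (hA : Arr ℓ 0 xs) (hN : xs.Nodup)
    {v : List ℕ} (hv : v ∈ xs) (hgt : xs.idxOf ℓ < xs.idxOf v) : RightOfBranch v ℓ := by
  obtain ⟨pre, suf, heq, harr, -⟩ := arr_split hA ℓ.length (by omega) (le_refl _)
  rw [List.take_length] at heq
  have hT : AllR ℓ suf := by
    obtain ⟨T, hTeq, hT⟩ := arr_last_inv harr rfl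
    rw [List.take_length] at hTeq
    injection hTeq with h1 h2
    subst h2
    exact hT
  have hidxl : xs.idxOf ℓ = pre.length := idx_of_decomp hN heq
  have hnpre : v ∉ pre := by
    intro hin
    have := (idx_lt_iff_mem_left hN heq hv).2 hin
    omega
  have hvsuf : v ∈ suf := by
    rw [heq] at hv
    rcases List.mem_append.1 hv with hv | hv
    · exact absurd hv hnpre
    rcases List.mem_cons.1 hv with rfl | hv
    · omega
    · exact hv
  exact hT v hvsuf

lemma gap_pattern {ℓ : List ℕ} {xs : List (List ℕ)} (hA : Arr ℓ 0 xs) (hN : xs.Nodup)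
    {e : ℕ} {u v : List ℕ} (he : e < ℓ.length) (hu : u ∈ xs) (hv : v ∈ xs)
    (h1 : xs.idxOf (ℓ.take e) < xs.idxOf u)
    (h2 : xs.idxOf u < xs.idxOf v)
    (h3 : xs.idxOf v < xs.idxOf (ℓ.take (e+1)))
    (hLu : LeftOfBranch u ℓ) (hRv : RightOfBranch v ℓ) : False := by
  obtain ⟨pre, suf, heq, harr, -⟩ := arr_split hA e (by omega) (by omega)
  obtain ⟨R, L, ys, hyseq, hR, hL, h⟩ := arr_step_inv harr he
  injection hyseq with hi1 hi2
  subst hi2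
  obtain ⟨tl, rfl⟩ := arr_head h
  have hidxe : xs.idxOf (ℓ.take e) = pre.length := idx_of_decomp hN heq
  -- decompositions
  have heq1 : xs = (pre ++ [ℓ.take e]) ++ (R ++ (L ++ (ℓ.take (e+1) :: tl))) := by
    rw [heq]; simp
  have heq2 : xs = ((pre ++ [ℓ.take e]) ++ (R ++ L)) ++ (ℓ.take (e+1) :: tl) := by
    rw [heq]; simp
  have heq3 : xs = ((pre ++ [ℓ.take e]) ++ R) ++ (L ++ (ℓ.take (e+1) :: tl)) := by
    rw [heq]; simp
  have hidxe1 : xs.idxOf (ℓ.take (e+1)) = pre.length + 1 + (R.length + L.length) := by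
    have hh := idx_of_decomp hN heq2
    rw [hh]
    simp only [List.length_append, List.length_singleton]
  -- u and v lie in R ++ L
  have humem : u ∈ R ++ L := by
    have h5 : u ∈ (pre ++ [ℓ.take e]) ++ (R ++ L) := by
      refine (idx_lt_iff_mem_left hN heq2 hu).1 ?_
      simp only [List.length_append, List.length_cons, List.length_singleton]
      omega
    rcases List.mem_append.1 h5 with h5 | h5
    · exfalso
      have := (idx_lt_iff_mem_left hN heq1 hu).2 h5
      simp only [List.length_append, List.length_singleton] at this
      omega
    · exact h5
  have hvmem : v ∈ R ++ L := by
    have h5 : v ∈ (pre ++ [ℓ.take e]) ++ (R ++ L) := by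
      refine (idx_lt_iff_mem_left hN heq2 hv).1 ?_
      simp only [List.length_append, List.length_cons, List.length_singleton]
      omega
    rcases List.mem_append.1 h5 with h5 | h5
    · exfalso
      have := (idx_lt_iff_mem_left hN heq1 hv).2 h5
      simp only [List.length_append, List.length_singleton] at this
      omega
    · exact h5
  have huL : u ∈ L := by
    rcases List.mem_append.1 humem with h5 | h5
    · exact absurd (hR u h5) (fun hR' => not_left_and_right hLu hR')
    · exact h5
  have hvR : v ∈ R := by
    rcases List.mem_append.1 hvmem with h5 | h5
    · exact h5
    · exact absurd (hL v h5) (fun hL' => not_left_and_right hL' hRv)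
  -- now compare positions using heq3
  have hvlt : xs.idxOf v < ((pre ++ [ℓ.take e]) ++ R).length :=
    (idx_lt_iff_mem_left hN heq3 hv).2 (by simp [hvR])
  have hunl : ¬ xs.idxOf u < ((pre ++ [ℓ.take e]) ++ R).length := by
    intro hcon
    have h5 := (idx_lt_iff_mem_left hN heq3 hu).1 hcon
    rcases List.mem_append.1 h5 with h5 | h5
    · rcases List.mem_append.1 h5 with h5 | h5
      · have := (idx_lt_iff_mem_left hN heq hu).2 h5
        omega
      · rcases List.mem_singleton.1 h5 with rfl
        omega
    · exact not_left_and_right hLu (hR u h5)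
  omega


/-- Let `B` be a branch (with leaf `ℓ`) and `A 0, …, A (m-1)` pairwise
disjoint memory intervals, each disjoint from `B` and each partitioned by `B`. Then each
`A i` lies in memory strictly between some vertex `ℓ.take (d+1)` of `B` and its parent
`ℓ.take d`, and for each vertex of `B` and its parent, at most one `A i` lies between
them in memory. -/
theorem intervals_between_branch_edges
    (ε : ℝ) (hε0 : 0 < ε) (hε1 : ε ≤ 1/2) (t : OTree) (ht : Uniform t)
    (ℓ : List ℕ) (hℓ : IsLeaf t ℓ)
    (m : ℕ) (A : ℕ → Set (List ℕ))
    (hmem : ∀ i < m, MemInterval ε t (A i))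
    (hdisjB : ∀ i < m, ∀ p ∈ A i, ¬ p <+: ℓ)
    (hdisjA : ∀ i < m, ∀ j < m, i ≠ j → Disjoint (A i) (A j))
    (hpart : ∀ i < m, (∃ p ∈ A i, LeftOfBranch p ℓ) ∧ (∃ p ∈ A i, RightOfBranch p ℓ)) :
    (∀ i < m, ∃ d < ℓ.length, ∀ p ∈ A i,
        pos ε t (ℓ.take d) < pos ε t p ∧ pos ε t p < pos ε t (ℓ.take (d + 1))) ∧
    (∀ d < ℓ.length, ∀ i < m, ∀ j < m,
        (∀ p ∈ A i, pos ε t (ℓ.take d) < pos ε t p ∧ pos ε t p < pos ε t (ℓ.take (d + 1))) →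
        (∀ p ∈ A j, pos ε t (ℓ.take d) < pos ε t p ∧ pos ε t p < pos ε t (ℓ.take (d + 1))) →
        i = j) := by
  classical
  set xs := vEB ε t with hxs
  have hA : Arr ℓ 0 xs := arr_vEBAux hε0 hε1 (height t) t ℓ (le_refl _) ht hℓ
  have hN : xs.Nodup := nodup_vEBAux hε0 hε1 (height t) t
  have hpos : ∀ p, pos ε t p = xs.idxOf p := fun p => rfl
  have hidxnil : xs.idxOf (ℓ.take 0) = 0 := by
    obtain ⟨tl, htl⟩ := arr_head hA
    rw [htl, indexOf_cons_self']
  -- window characterization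
  have hchar : ∀ i < m, ∃ a n, 0 < a ∧
      (∀ p, p ∈ A i ↔ p ∈ xs ∧ a ≤ xs.idxOf p ∧ xs.idxOf p < a + n) := by
    intro i hi
    obtain ⟨a, n, hAi⟩ := hmem i hi
    have hch : ∀ p, p ∈ A i ↔ p ∈ xs ∧ a ≤ xs.idxOf p ∧ xs.idxOf p < a + n := by
      intro p
      rw [hAi]
      simp only [Set.mem_setOf_eq]
      exact mem_window_iff hN
    have hne : 0 < a := by
      by_contra h0
      obtain ⟨l0, hl0, hl0L⟩ := (hpart i hi).1
      have hl0' := (hch l0).1 hl0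
      have hnil : ℓ.take 0 ∈ xs := take_mem_of_arr hA (by omega)
      have : ℓ.take 0 ∈ A i := (hch _).2 ⟨hnil, by omega, by omega⟩
      exact hdisjB i hi _ this (List.take_prefix _ _)
    exact ⟨a, n, hne, hch⟩
  constructor
  · -- existence
    intro i hi
    obtain ⟨a, n, ha, hch⟩ := hchar i hi
    obtain ⟨l0, hl0, hl0L⟩ := (hpart i hi).1
    set P := fun e => xs.idxOf (ℓ.take e) < a with hP
    have hP0 : P 0 := by rw [hP]; simp only; omega
    set d := Nat.findGreatest P ℓ.length with hd
    have hPd : P d := Nat.findGreatest_spec (Nat.zero_le _) hP0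
    have hdle : d ≤ ℓ.length := Nat.findGreatest_le _
    have hdlt : d < ℓ.length := by
      rcases eq_or_lt_of_le hdle with heqd | h
      · exfalso
        have hPl : xs.idxOf (ℓ.take ℓ.length) < a := by rw [← heqd]; exact hPd
        rw [List.take_length] at hPl
        have hl0x := (hch l0).1 hl0
        have : RightOfBranch l0 ℓ := right_of_after_leaf hA hN hl0x.1 (by omega)
        exact not_left_and_right hl0L this
      · exact h
    refine ⟨d, hdlt, ?_⟩
    have hnP : ¬ P (d+1) := Nat.findGreatest_is_greatest (n := ℓ.length) (by omega) (by omega)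
    have hnP' : a ≤ xs.idxOf (ℓ.take (d+1)) := by
      rw [hP] at hnP
      simp only [not_lt] at hnP
      exact hnP
    have hge : a + n ≤ xs.idxOf (ℓ.take (d+1)) := by
      by_contra hcon
      have hmem1 : ℓ.take (d+1) ∈ A i :=
        (hch _).2 ⟨take_mem_of_arr hA (e := d+1) (by omega), by omega, by omega⟩
      exact hdisjB i hi _ hmem1 (List.take_prefix _ _)
    intro p hp
    have hp' := (hch p).1 hp
    rw [hpos, hpos, hpos]
    have hPdlt : xs.idxOf (ℓ.take d) < a := hPd
    exact ⟨by omega, by omega⟩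
  · -- uniqueness
    intro d hd i hi j hj hi' hj'
    simp only [hpos] at hi' hj'
    by_contra hij
    obtain ⟨ai, ni, hai, hchi⟩ := hchar i hi
    obtain ⟨aj, nj, haj, hchj⟩ := hchar j hj
    obtain ⟨li, hliA, hliL⟩ := (hpart i hi).1
    obtain ⟨ri, hriA, hriR⟩ := (hpart i hi).2
    obtain ⟨lj, hljA, hljL⟩ := (hpart j hj).1
    obtain ⟨rj, hrjA, hrjR⟩ := (hpart j hj).2
    have hdisj := hdisjA i hi j hj hij
    have hlix := ((hchi li).1 hliA).1
    have hrix := ((hchi ri).1 hriA).1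
    have hljx := ((hchj lj).1 hljA).1
    have hrjx := ((hchj rj).1 hrjA).1
    have key : ∀ u vv, u ∈ xs → vv ∈ xs → LeftOfBranch u ℓ → RightOfBranch vv ℓ →
        (xs.idxOf (ℓ.take d) < xs.idxOf u ∧ xs.idxOf u < xs.idxOf (ℓ.take (d+1))) →
        (xs.idxOf (ℓ.take d) < xs.idxOf vv ∧ xs.idxOf vv < xs.idxOf (ℓ.take (d+1))) →
        xs.idxOf vv < xs.idxOf u := by
      intro u vv hux hvx hLu hRv hgu hgv
      rcases lt_trichotomy (xs.idxOf u) (xs.idxOf vv) with hlt | heqi | hgt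
      · exact absurd (gap_pattern hA hN hd hux hvx hgu.1 hlt hgv.2 hLu hRv) not_false
      · exfalso
        have := eq_of_indexOf_eq hux hvx heqi
        subst this
        exact not_left_and_right hLu hRv
      · exact hgt
    have k1 : xs.idxOf rj < xs.idxOf li :=
      key li rj hlix hrjx hliL hrjR (hi' li hliA) (hj' rj hrjA)
    have k2 : xs.idxOf ri < xs.idxOf lj :=
      key lj ri hljx hrix hljL hriR (hj' lj hljA) (hi' ri hriA)
    have hri' := (hchi ri).1 hriA
    have hli' := (hchi li).1 hliA
    have hrj' := (hchj rj).1 hrjA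
    have hlj' := (hchj lj).1 hljA
    rcases le_or_gt (xs.idxOf ri) (xs.idxOf rj) with hle | hlt
    · have : rj ∈ A i := (hchi rj).2 ⟨hrjx, by omega, by omega⟩
      exact Set.disjoint_left.1 hdisj this hrjA
    · have : ri ∈ A j := (hchj ri).2 ⟨hrix, by omega, by omega⟩
      exact Set.disjoint_left.1 hdisj hriA this

end VEB
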